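/- Deutsch entropic uncertainty principle: Let {τ_j}_{j=1}^n and {ω_j}_{j=1}^n be two orthonormal bases of a finite-dimensional Hilbert space H. Then for every unit vector h with ⟨h, τ_j⟩ ≠ 0 and ⟨h, ω_j⟩ ≠ 0 for all j, S_τ(h) + S_ω(h) ≥ -2 log((1 + max_{j,k} |⟨τ_j, ω_k⟩|)/2) ≥ 0, where S_τ(h) = Σ_j |⟨h, τ_j⟩|² log(1/|⟨h, τ_j⟩|²). -/

import Mathlib

private lemma buzano_aux {𝕜 H : Type*} [RCLike 𝕜] [NormedAddCommGroup H]
    [InnerProductSpace 𝕜 H] (h u v : H) (hh : ‖h‖ = 1) :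
    ‖(inner 𝕜 h u : 𝕜)‖ * ‖(inner 𝕜 h v : 𝕜)‖ ≤ (‖u‖ * ‖v‖ + ‖(inner 𝕜 u v : 𝕜)‖) / 2 := by
  set p : H := (inner 𝕜 h u : 𝕜) • h with hp
  have hhalf : ‖(1/2 : 𝕜)‖ = 1/2 := by
    have : ((1/2 : ℝ) : 𝕜) = (1/2 : 𝕜) := by push_cast; ring
    rw [← this, RCLike.norm_ofReal]; norm_num
  have hps : ‖p - (1/2 : 𝕜) • u‖ ^ 2 = (‖u‖ / 2) ^ 2 := by
    have e2 : (inner 𝕜 p ((1/2 : 𝕜) • u) : 𝕜) = ((‖(inner 𝕜 h u : 𝕜)‖ ^ 2 / 2 : ℝ) : 𝕜) := by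
      rw [inner_smul_right, hp, inner_smul_left, RCLike.conj_mul]
      push_cast; ring
    rw [@norm_sub_sq 𝕜, e2, RCLike.ofReal_re, norm_smul, norm_smul, hh, mul_one, hhalf]
    ring
  have hps' : ‖p - (1/2 : 𝕜) • u‖ = ‖u‖ / 2 := by
    have h1 := congrArg Real.sqrt hps
    rwa [Real.sqrt_sq (norm_nonneg _), Real.sqrt_sq (by positivity)] at h1
  calc ‖(inner 𝕜 h u : 𝕜)‖ * ‖(inner 𝕜 h v : 𝕜)‖ = ‖(inner 𝕜 p v : 𝕜)‖ := by
        rw [hp, inner_smul_left, norm_mul, RCLike.norm_conj]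
    _ = ‖(inner 𝕜 (p - (1/2 : 𝕜) • u) v : 𝕜) + (inner 𝕜 ((1/2 : 𝕜) • u) v : 𝕜)‖ := by
        rw [← inner_add_left, sub_add_cancel]
    _ ≤ ‖(inner 𝕜 (p - (1/2 : 𝕜) • u) v : 𝕜)‖ + ‖(inner 𝕜 ((1/2 : 𝕜) • u) v : 𝕜)‖ :=
        norm_add_le _ _
    _ ≤ ‖p - (1/2 : 𝕜) • u‖ * ‖v‖ + (1/2) * ‖(inner 𝕜 u v : 𝕜)‖ := by
        refine add_le_add (norm_inner_le_norm _ _) (le_of_eq ?_)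
        rw [inner_smul_left, norm_mul, RCLike.norm_conj, hhalf]
    _ = (‖u‖ * ‖v‖ + ‖(inner 𝕜 u v : 𝕜)‖) / 2 := by rw [hps']; ring

theorem deutsch_uncertainty {𝕜 H : Type*} [RCLike 𝕜] [NormedAddCommGroup H]
    [InnerProductSpace 𝕜 H] [FiniteDimensional 𝕜 H]
    {n : ℕ} (hn : 0 < n)
    (τ : OrthonormalBasis (Fin n) 𝕜 H) (ω : OrthonormalBasis (Fin n) 𝕜 H)
    (h : H) (hh : ‖h‖ = 1)
    (hhτ : ∀ j, (inner 𝕜 h (τ j) : 𝕜) ≠ 0) (hhω : ∀ j, (inner 𝕜 h (ω j) : 𝕜) ≠ 0) :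
    (∑ j, ‖(inner 𝕜 h (τ j) : 𝕜)‖ ^ 2 * Real.log (1 / ‖(inner 𝕜 h (τ j) : 𝕜)‖ ^ 2)) +
      (∑ j, ‖(inner 𝕜 h (ω j) : 𝕜)‖ ^ 2 * Real.log (1 / ‖(inner 𝕜 h (ω j) : 𝕜)‖ ^ 2)) ≥
      -2 * Real.log ((1 + ⨆ j, ⨆ k, ‖(inner 𝕜 (τ j) (ω k) : 𝕜)‖) / 2) ∧
    -2 * Real.log ((1 + ⨆ j, ⨆ k, ‖(inner 𝕜 (τ j) (ω k) : 𝕜)‖) / 2) ≥ 0 := by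
  haveI : Nonempty (Fin n) := ⟨⟨0, hn⟩⟩
  set a : Fin n → ℝ := fun j => ‖(inner 𝕜 h (τ j) : 𝕜)‖ ^ 2 with ha
  set b : Fin n → ℝ := fun k => ‖(inner 𝕜 h (ω k) : 𝕜)‖ ^ 2 with hb
  set M : ℝ := ⨆ j, ⨆ k, ‖(inner 𝕜 (τ j) (ω k) : 𝕜)‖ with hM
  set c : ℝ := (1 + M) / 2 with hc
  have hapos : ∀ j, 0 < a j := fun j => by
    simpa [ha] using pow_pos (norm_pos_iff.mpr (hhτ j)) 2
  have hbpos : ∀ k, 0 < b k := fun k => by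
    simpa [hb] using pow_pos (norm_pos_iff.mpr (hhω k)) 2
  -- Parseval
  have parseval : ∀ (β : OrthonormalBasis (Fin n) 𝕜 H),
      ∑ j, ‖(inner 𝕜 h (β j) : 𝕜)‖ ^ 2 = 1 := by
    intro β
    have hsum := β.sum_inner_mul_inner h h
    have e : ∑ j, ((‖(inner 𝕜 h (β j) : 𝕜)‖ ^ 2 : ℝ) : 𝕜) = ((1 : ℝ) : 𝕜) := by
      calc ∑ j, ((‖(inner 𝕜 h (β j) : 𝕜)‖ ^ 2 : ℝ) : 𝕜)
          = ∑ j, (inner 𝕜 h (β j) : 𝕜) * (inner 𝕜 (β j) h : 𝕜) := by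
            refine Finset.sum_congr rfl fun j _ => ?_
            rw [← inner_conj_symm (β j) h, RCLike.mul_conj]
            push_cast
            ring
        _ = (inner 𝕜 h h : 𝕜) := hsum
        _ = ((1 : ℝ) : 𝕜) := by rw [inner_self_eq_norm_sq_to_K, hh]; norm_num
    exact_mod_cast e
  have hsa : ∑ j, a j = 1 := parseval τ
  have hsb : ∑ k, b k = 1 := parseval ω
  -- bounds on M and c
  have hbdd : ∀ j, BddAbove (Set.range fun k => ‖(inner 𝕜 (τ j) (ω k) : 𝕜)‖) :=
    fun j => (Set.finite_range _).bddAbove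
  have hbdd2 : BddAbove (Set.range fun j => ⨆ k, ‖(inner 𝕜 (τ j) (ω k) : 𝕜)‖) :=
    (Set.finite_range _).bddAbove
  have hjkM : ∀ j k, ‖(inner 𝕜 (τ j) (ω k) : 𝕜)‖ ≤ M := fun j k =>
    le_trans (le_ciSup (hbdd j) k) (le_ciSup hbdd2 j)
  have hM0 : 0 ≤ M := le_trans (norm_nonneg _) (hjkM ⟨0, hn⟩ ⟨0, hn⟩)
  have hM1 : M ≤ 1 := by
    refine ciSup_le fun j => ciSup_le fun k => ?_
    calc ‖(inner 𝕜 (τ j) (ω k) : 𝕜)‖ ≤ ‖τ j‖ * ‖ω k‖ := norm_inner_le_norm _ _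
      _ = 1 := by rw [τ.orthonormal.1 j, ω.orthonormal.1 k, mul_one]
  have hcpos : 0 < c := by rw [hc]; linarith
  have hc1 : c ≤ 1 := by rw [hc]; linarith
  -- key product bound via Buzano
  have hab : ∀ j k, a j * b k ≤ c ^ 2 := by
    intro j k
    have hbz := buzano_aux (𝕜 := 𝕜) h (τ j) (ω k) hh
    rw [τ.orthonormal.1 j, ω.orthonormal.1 k, one_mul] at hbz
    have hbz2 : ‖(inner 𝕜 h (τ j) : 𝕜)‖ * ‖(inner 𝕜 h (ω k) : 𝕜)‖ ≤ c := by
      refine hbz.trans ?_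
      rw [hc]
      have := hjkM j k
      linarith
    calc a j * b k = (‖(inner 𝕜 h (τ j) : 𝕜)‖ * ‖(inner 𝕜 h (ω k) : 𝕜)‖) ^ 2 := by
          rw [ha, hb]; ring
      _ ≤ c ^ 2 := by
          refine pow_le_pow_left₀ (by positivity) hbz2 2
  -- the log lower bound
  have hlog : ∀ j k, Real.log (1 / a j) + Real.log (1 / b k) ≥ -2 * Real.log c := by
    intro j k
    have h1 : Real.log (a j * b k) ≤ Real.log (c ^ 2) :=
      Real.log_le_log (mul_pos (hapos j) (hbpos k)) (hab j k)
    rw [Real.log_mul (hapos j).ne' (hbpos k).ne'] at h1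
    have hlc : Real.log (c ^ 2) = 2 * Real.log c := by
      rw [Real.log_pow]; push_cast; ring
    rw [one_div, one_div, Real.log_inv, Real.log_inv]
    linarith
  -- rewrite the sums as double sums
  have hSτ : ∑ j, a j * Real.log (1 / a j)
      = ∑ j, ∑ k, a j * b k * Real.log (1 / a j) := by
    refine Finset.sum_congr rfl fun j _ => ?_
    rw [show ∑ k, a j * b k * Real.log (1 / a j)
        = (a j * Real.log (1 / a j)) * ∑ k, b k by
      rw [Finset.mul_sum]; exact Finset.sum_congr rfl fun k _ => by ring]
    rw [hsb, mul_one]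
  have hSω : ∑ k, b k * Real.log (1 / b k)
      = ∑ j, ∑ k, a j * b k * Real.log (1 / b k) := by
    rw [Finset.sum_comm]
    refine Finset.sum_congr rfl fun k _ => ?_
    rw [show ∑ j, a j * b k * Real.log (1 / b k)
        = (b k * Real.log (1 / b k)) * ∑ j, a j by
      rw [Finset.mul_sum]; exact Finset.sum_congr rfl fun j _ => by ring]
    rw [hsa, mul_one]
  constructor
  · calc (∑ j, a j * Real.log (1 / a j)) + (∑ k, b k * Real.log (1 / b k))
        = ∑ j, ∑ k, a j * b k * (Real.log (1 / a j) + Real.log (1 / b k)) := by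
          rw [hSτ, hSω, ← Finset.sum_add_distrib]
          refine Finset.sum_congr rfl fun j _ => ?_
          rw [← Finset.sum_add_distrib]
          exact Finset.sum_congr rfl fun k _ => by ring
      _ ≥ ∑ j, ∑ k, a j * b k * (-2 * Real.log c) := by
          refine Finset.sum_le_sum fun j _ => Finset.sum_le_sum fun k _ => ?_
          exact mul_le_mul_of_nonneg_left (hlog j k) (by positivity)
      _ = -2 * Real.log c := by
          have inner_eq : ∀ j : Fin n,
              ∑ k, a j * b k * (-2 * Real.log c) = a j * (-2 * Real.log c) := by
            intro j
            rw [show (∑ k, a j * b k * (-2 * Real.log c))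
                = (a j * (-2 * Real.log c)) * ∑ k, b k from by
              rw [Finset.mul_sum]; exact Finset.sum_congr rfl fun k _ => by ring]
            rw [hsb, mul_one]
          rw [Finset.sum_congr rfl fun j _ => inner_eq j, ← Finset.sum_mul, hsa, one_mul]
  · have : Real.log c ≤ 0 := Real.log_nonpos hcpos.le hc1
    linarith
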